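/- Let n ≥ 1 and let a_1, …, a_n be real numbers such that 1 − e_2(a_1,…,a_n) + e_4(a_1,…,a_n) − e_6(a_1,…,a_n) + ⋯ ≠ 0, where e_k denotes the k-th elementary symmetric polynomial. Then tan(Σ_{k=1}^n arctan(a_k)) = (e_1 − e_3 + e_5 − ⋯)/(1 − e_2 + e_4 − ⋯), where the numerator is the alternating sum of the odd-indexed elementary symmetric polynomials and the denominator is the alternating sum 1 − e_2 + e_4 − ⋯ of the even-indexed ones. -/

import Mathlib

open Finset Complex Real

/-- The `k`-th elementary symmetric polynomial of `a : Fin n → ℝ`. -/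
noncomputable def esym (n : ℕ) (a : Fin n → ℝ) (k : ℕ) : ℝ :=
  ∑ s ∈ Finset.powersetCard k (Finset.univ : Finset (Fin n)), ∏ i ∈ s, a i

private lemma sum_range_even_odd {M : Type*} [AddCommMonoid M] (f : ℕ → M) (n : ℕ) :
    ∑ k ∈ Finset.range (n + 1), f k =
      ∑ m ∈ Finset.range (n / 2 + 1), f (2 * m) +
        ∑ m ∈ Finset.range ((n + 1) / 2), f (2 * m + 1) := by
  induction n with
  | zero => simp
  | succ n ih =>
    rcases Nat.even_or_odd n with ⟨t, ht⟩ | ⟨t, ht⟩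
    · subst ht
      rw [Finset.sum_range_succ, ih]
      simp only [show (t + t) / 2 = t from by omega, show (t + t + 1) / 2 = t from by omega,
        show (t + t + 1 + 1) / 2 = t + 1 from by omega]
      rw [Finset.sum_range_succ (fun m => f (2 * m + 1)) t, show 2 * t + 1 = t + t + 1 from by ring]
      abel
    · subst ht
      rw [Finset.sum_range_succ, ih]
      simp only [show (2 * t + 1) / 2 = t from by omega, show (2 * t + 1 + 1) / 2 = t + 1 from by omega,
        show (2 * t + 1 + 1 + 1) / 2 = t + 1 from by omega]
      rw [Finset.sum_range_succ (fun m => f (2 * m)) (t + 1), show 2 * (t + 1) = 2 * t + 1 + 1 from by ring]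
      abel

private lemma arg_prod_coe_angle {ι : Type*} (s : Finset ι) (f : ι → ℂ)
    (hf : ∀ i ∈ s, f i ≠ 0) :
    ((Complex.arg (∏ i ∈ s, f i) : ℝ) : Real.Angle) =
      ∑ i ∈ s, ((Complex.arg (f i) : ℝ) : Real.Angle) := by
  induction s using Finset.cons_induction with
  | empty => simp
  | cons i s hi ih =>
    rw [Finset.prod_cons, Finset.sum_cons,
      Complex.arg_mul_coe_angle (hf i (Finset.mem_cons_self i s))
        (Finset.prod_ne_zero_iff.2 fun j hj => hf j (Finset.mem_cons_of_mem hj)),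
      ih fun j hj => hf j (Finset.mem_cons_of_mem hj)]

/-- Tangent of a sum of arctangents: if the alternating sum
`1 - e_2 + e_4 - ⋯` of even elementary symmetric polynomials of `a_1, …, a_n` is nonzero,
then `tan (Σ arctan aₖ) = (e_1 - e_3 + e_5 - ⋯) / (1 - e_2 + e_4 - ⋯)`. -/
theorem tan_sum_arctan (n : ℕ) (hn : 1 ≤ n) (a : Fin n → ℝ)
    (hden : (∑ m ∈ Finset.range (n / 2 + 1), (-1 : ℝ) ^ m * esym n a (2 * m)) ≠ 0) :
    Real.tan (∑ k, Real.arctan (a k)) =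
      (∑ m ∈ Finset.range ((n + 1) / 2), (-1 : ℝ) ^ m * esym n a (2 * m + 1)) /
        (∑ m ∈ Finset.range (n / 2 + 1), (-1 : ℝ) ^ m * esym n a (2 * m)) := by
  set D : ℝ := ∑ m ∈ Finset.range (n / 2 + 1), (-1 : ℝ) ^ m * esym n a (2 * m) with hD
  set N : ℝ := ∑ m ∈ Finset.range ((n + 1) / 2), (-1 : ℝ) ^ m * esym n a (2 * m + 1) with hN
  set P : ℂ := ∏ i, (1 + (a i : ℂ) * I) with hPdef
  have hfac : ∀ i : Fin n, (1 + (a i : ℂ) * I) ≠ 0 := by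
    intro i h
    have : (1 + (a i : ℂ) * I).re = 0 := by rw [h]; simp
    simp at this
  -- Expand the product
  have hP : P = ∑ k ∈ Finset.range (n + 1), I ^ k * (esym n a k : ℂ) := by
    have cardn : (Finset.univ : Finset (Fin n)).card = n := Finset.card_univ.trans (Fintype.card_fin n)
    calc P = ∏ i, ((a i : ℂ) * I + 1) := by rw [hPdef]; exact Finset.prod_congr rfl fun i _ => by ring
    _ = ∑ t ∈ (Finset.univ : Finset (Fin n)).powerset,
          (∏ i ∈ t, (a i : ℂ) * I) * ∏ i ∈ (Finset.univ : Finset (Fin n)) \ t, (1 : ℂ) :=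
        Finset.prod_add _ _ _
    _ = ∑ t ∈ (Finset.univ : Finset (Fin n)).powerset, I ^ t.card * ∏ i ∈ t, (a i : ℂ) := by
        refine Finset.sum_congr rfl fun t _ => ?_
        rw [Finset.prod_mul_distrib, Finset.prod_const, Finset.prod_const_one, mul_one, mul_comm]
    _ = ∑ k ∈ Finset.range (n + 1), ∑ t ∈ Finset.powersetCard k (Finset.univ : Finset (Fin n)),
          I ^ t.card * ∏ i ∈ t, (a i : ℂ) := by
        rw [Finset.sum_powerset, cardn]
    _ = ∑ k ∈ Finset.range (n + 1), I ^ k * (esym n a k : ℂ) := by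
        refine Finset.sum_congr rfl fun k _ => ?_
        rw [show ((esym n a k : ℝ) : ℂ) = ∑ t ∈ Finset.powersetCard k (Finset.univ : Finset (Fin n)),
            ∏ i ∈ t, (a i : ℂ) by rw [esym]; push_cast; rfl, Finset.mul_sum]
        refine Finset.sum_congr rfl fun t ht => ?_
        rw [(Finset.mem_powersetCard.1 ht).2]
  -- P = D + N * I
  have hPDN : P = (D : ℂ) + (N : ℂ) * I := by
    rw [hP, sum_range_even_odd (fun k => I ^ k * (esym n a k : ℂ)) n, hD, hN]
    push_cast
    rw [Finset.sum_mul]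
    congr 1
    · exact Finset.sum_congr rfl fun m _ => by
        rw [pow_mul, Complex.I_sq]
    · exact Finset.sum_congr rfl fun m _ => by
        rw [pow_succ, pow_mul, Complex.I_sq]; ring
  have hPre : P.re = D := by rw [hPDN]; simp
  have hPim : P.im = N := by rw [hPDN]; simp
  have hPne : P ≠ 0 := by intro h; apply hden; rw [← hPre, h]; simp
  -- arctan = arg of factor
  have harg : ∀ i : Fin n, Real.arctan (a i) = Complex.arg (1 + (a i : ℂ) * I) := by
    intro i
    have hre : (0:ℝ) < (1 + (a i : ℂ) * I).re := by simp
    have hbound : |Complex.arg (1 + (a i : ℂ) * I)| < π / 2 :=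
      Complex.abs_arg_lt_pi_div_two_iff.2 (Or.inl hre)
    have htan : Real.tan (Complex.arg (1 + (a i : ℂ) * I)) = a i := by
      rw [Complex.tan_arg]; simp
    have h2 := Real.arctan_tan (abs_lt.1 hbound).1 (abs_lt.1 hbound).2
    rw [htan] at h2
    exact h2
  -- angle equality
  have hangle : ((∑ k, Real.arctan (a k) : ℝ) : Real.Angle) = ((Complex.arg P : ℝ) : Real.Angle) := by
    rw [hPdef, arg_prod_coe_angle _ _ fun i _ => hfac i]
    have hms : ((∑ k, Real.arctan (a k) : ℝ) : Real.Angle)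
        = ∑ k, ((Real.arctan (a k) : ℝ) : Real.Angle) := by
      have := map_sum Real.Angle.coeHom (fun k => Real.arctan (a k)) Finset.univ
      simpa only [Real.Angle.coe_coeHom] using this
    rw [hms]
    exact Finset.sum_congr rfl fun i _ => congrArg _ (harg i)
  calc Real.tan (∑ k, Real.arctan (a k))
      = Real.Angle.tan ((∑ k, Real.arctan (a k) : ℝ) : Real.Angle) := (Real.Angle.tan_coe _).symm
    _ = Real.Angle.tan ((Complex.arg P : ℝ) : Real.Angle) := by rw [hangle]
    _ = Real.tan (Complex.arg P) := Real.Angle.tan_coe _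
    _ = P.im / P.re := Complex.tan_arg P
    _ = N / D := by rw [hPre, hPim]
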